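/- For any real A ≥ 0 with A ≠ 1 and any real χ, the integral (1/2π) ∫₀^{2π} (2 + 2A cos(2φ + χ))/(1 + A² + 2A cos(2φ + χ)) dφ equals 0 if A > 1 and equals 2 if A < 1. For A = 1 (with χ such that the denominator vanishes only on a measure-zero set) the integral equals 1. -/

import Mathlib

open Real intervalIntegral

private lemma hasDerivAt_im' {f : ℝ → ℂ} {f' : ℂ} {x : ℝ} (hf : HasDerivAt f f' x) :
    HasDerivAt (fun x => (f x).im) f'.im x := by
  have h := (Complex.imCLM.hasFDerivAt.comp x hf.hasFDerivAt).hasDerivAt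
  simp at h
  exact h

private lemma exp_theta (θ : ℝ) :
    Complex.exp ((θ : ℂ) * Complex.I) = (Real.cos θ : ℂ) + (Real.sin θ : ℂ) * Complex.I := by
  rw [Complex.exp_mul_I]; norm_cast

-- derivative of the exponent map
private lemma hasDerivAt_inner (χ : ℝ) (c : ℝ) (φ : ℝ) :
    HasDerivAt (fun φ : ℝ => ((c : ℂ) * (2 * (φ:ℂ) + χ)) * Complex.I)
      ((c : ℂ) * 2 * Complex.I) φ := by
  have h : HasDerivAt (fun φ : ℝ => (φ : ℂ)) 1 φ := Complex.ofRealCLM.hasDerivAt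
  simpa [mul_comm, mul_assoc, mul_left_comm] using
    (((h.const_mul (2:ℂ)).add_const (χ:ℂ)).const_mul (c:ℂ)).mul_const Complex.I

private lemma key_deriv (B χ c : ℝ) (hB0 : 0 ≤ B) (hB : B < 1) (φ : ℝ) :
    HasDerivAt (fun φ : ℝ =>
        (Complex.log (1 + (B:ℂ) * Complex.exp (((c:ℂ) * (2 * (φ:ℂ) + χ)) * Complex.I))).im)
      (2 * c * B * (Real.cos (c * (2 * φ + χ)) + B) /
        (1 + B ^ 2 + 2 * B * Real.cos (c * (2 * φ + χ)))) φ := by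
  set w : ℝ := c * (2 * φ + χ) with hw
  have hcast : ∀ ψ : ℝ, ((c:ℂ) * (2 * (ψ:ℂ) + χ)) * Complex.I = ((c * (2*ψ+χ) : ℝ) : ℂ) * Complex.I := by
    intro ψ; push_cast; ring
  have hzre : (1 + (B:ℂ) * Complex.exp (((c:ℂ) * (2 * (φ:ℂ) + χ)) * Complex.I)).re
      = 1 + B * Real.cos w := by
    rw [hcast φ, exp_theta]
    simp only [Complex.add_re, Complex.mul_re, Complex.ofReal_re, Complex.ofReal_im,
      Complex.mul_im, Complex.I_re, Complex.I_im, Complex.one_re]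
    ring
  have hslit : (1 + (B:ℂ) * Complex.exp (((c:ℂ) * (2 * (φ:ℂ) + χ)) * Complex.I)) ∈ Complex.slitPlane := by
    rw [Complex.mem_slitPlane_iff, hzre]
    left
    nlinarith [Real.neg_one_le_cos w]
  have hz := ((hasDerivAt_inner χ c φ).cexp.const_mul (B:ℂ)).const_add 1
  have hlog := hz.clog_real hslit
  have him := hasDerivAt_im' hlog
  convert him using 1
  rw [hcast φ, exp_theta]
  have hDpos : (0:ℝ) < 1 + B^2 + 2*B*Real.cos w := by nlinarith [Real.neg_one_le_cos w]
  rw [Complex.div_im]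
  simp only [Complex.normSq_apply, Complex.add_re, Complex.add_im, Complex.one_re, Complex.one_im,
    Complex.mul_re, Complex.mul_im, Complex.ofReal_re, Complex.ofReal_im, Complex.I_re,
    Complex.I_im, Complex.re_ofNat, Complex.im_ofNat]
  rw [hw]
  ring_nf
  rw [show (1 + B * Real.cos (c*φ*2+c*χ) * 2 + B^2*Real.cos (c*φ*2+c*χ)^2
      + B^2*Real.sin (c*φ*2+c*χ)^2) = 1 + B*Real.cos (c*φ*2+c*χ)*2 + B^2 from by
    linear_combination B^2 * Real.sin_sq_add_cos_sq (c*φ*2+c*χ)]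
  linear_combination (-2*c*B^2*(1 + B * Real.cos (c*φ*2+c*χ) * 2 + B^2)⁻¹) *
    Real.sin_sq_add_cos_sq (c*φ*2+c*χ)

/-- The regularized vortex-strength integral of the linear solution:
`(1/2π) ∫₀^{2π} (2+2A cos(2φ+χ))/(1+A²+2A cos(2φ+χ)) dφ` equals `0` if `A > 1`,
`2` if `0 ≤ A < 1`, and `1` if `A = 1`. -/
theorem vortex_strength_integral_linear_solution (A χ : ℝ) (hA : 0 ≤ A) :
    (1 < A → (1 / (2 * π)) * ∫ φ in (0:ℝ)..(2 * π),
        (2 + 2 * A * Real.cos (2 * φ + χ)) / (1 + A ^ 2 + 2 * A * Real.cos (2 * φ + χ)) = 0)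
    ∧ (A < 1 → (1 / (2 * π)) * ∫ φ in (0:ℝ)..(2 * π),
        (2 + 2 * A * Real.cos (2 * φ + χ)) / (1 + A ^ 2 + 2 * A * Real.cos (2 * φ + χ)) = 2)
    ∧ (A = 1 → (1 / (2 * π)) * ∫ φ in (0:ℝ)..(2 * π),
        (2 + 2 * A * Real.cos (2 * φ + χ)) / (1 + A ^ 2 + 2 * A * Real.cos (2 * φ + χ)) = 1) := by
  set f : ℝ → ℝ := fun φ =>
    (2 + 2 * A * Real.cos (2 * φ + χ)) / (1 + A ^ 2 + 2 * A * Real.cos (2 * φ + χ)) with hf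
  have hDpos : A ≠ 1 → ∀ x : ℝ, 0 < 1 + A ^ 2 + 2 * A * Real.cos (2 * x + χ) := by
    intro hne x
    have h1 : 0 < (A - 1) ^ 2 := by
      have := sub_ne_zero.mpr hne; positivity
    nlinarith [Real.neg_one_le_cos (2 * x + χ)]
  have hint : A ≠ 1 → IntervalIntegrable f MeasureTheory.volume 0 (2 * π) := by
    intro hne
    have hc : Continuous f := by
      apply Continuous.div (by fun_prop) (by fun_prop)
      exact fun x => (hDpos hne x).ne'
    exact hc.intervalIntegrable _ _
  refine ⟨?_, ?_, ?_⟩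
  · -- A > 1
    intro hgt
    have hne : A ≠ 1 := by linarith
    have hA0 : A ≠ 0 := by linarith
    have hB0 : (0:ℝ) ≤ A⁻¹ := by positivity
    have hB1 : A⁻¹ < 1 := by
      rw [inv_lt_one_iff₀]; right; exact hgt
    set G : ℝ → ℝ := fun φ =>
      -(Complex.log (1 + (A⁻¹:ℝ) * Complex.exp ((((-1:ℝ):ℂ) * (2 * (φ:ℂ) + χ)) * Complex.I))).im
      with hG
    have hGd : ∀ x ∈ Set.uIcc (0:ℝ) (2 * π), HasDerivAt G (f x) x := by
      intro x _
      have h := (key_deriv A⁻¹ χ (-1) hB0 hB1 x).neg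
      convert h using 1
      · rfl
      · rfl
      · rfl
      have hc := Real.cos_neg (2 * x + χ)
      have hDB : (0:ℝ) < 1 + (A⁻¹) ^ 2 + 2 * A⁻¹ * Real.cos (2 * x + χ) := by
        nlinarith [Real.neg_one_le_cos (2 * x + χ)]
      rw [hf]
      simp only [show (-1:ℝ) * (2 * x + χ) = -(2 * x + χ) by ring, Real.cos_neg]
      rw [← neg_div, div_eq_div_iff (hDpos hne x).ne' hDB.ne']
      field_simp
      ring
    have hval : (∫ φ in (0:ℝ)..(2 * π), f φ) = G (2 * π) - G 0 :=
      intervalIntegral.integral_eq_sub_of_hasDerivAt hGd (hint hne)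
    have hexp : Complex.exp ((((-1:ℝ):ℂ) * (2 * ((2*π:ℝ):ℂ) + χ)) * Complex.I)
        = Complex.exp ((((-1:ℝ):ℂ) * (2 * ((0:ℝ):ℂ) + χ)) * Complex.I) := by
      rw [show (((-1:ℝ):ℂ) * (2 * ((2*π:ℝ):ℂ) + χ)) * Complex.I
          = (((-1:ℝ):ℂ) * (2 * ((0:ℝ):ℂ) + χ)) * Complex.I + (-(2 * (π:ℝ)) * Complex.I + -(2 * (π:ℝ)) * Complex.I) by
        push_cast; ring]
      rw [Complex.exp_add, Complex.exp_add, show Complex.exp (-(2 * (π:ℝ)) * Complex.I) = 1 from by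
        rw [show (-(2 * (π:ℝ)) * Complex.I : ℂ) = ((-1:ℤ)) * (2 * (π:ℝ) * Complex.I) by push_cast; ring,
          Complex.exp_int_mul_two_pi_mul_I], mul_one, mul_one]
    have : G (2 * π) = G 0 := by
      rw [hG]; simp only; rw [show ((2 * (((2*π):ℝ)):ℂ)) = (2 * (((2*π):ℝ)):ℂ) from rfl]
      push_cast
      push_cast at hexp
      rw [hexp]
    rw [hval, this, sub_self, mul_zero]
  · -- A < 1
    intro hlt
    have hne : A ≠ 1 := by linarith
    set G : ℝ → ℝ := fun φ => 2 * φ + χ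
      - (Complex.log (1 + (A:ℝ) * Complex.exp ((((1:ℝ):ℂ) * (2 * (φ:ℂ) + χ)) * Complex.I))).im
      with hG
    have hGd : ∀ x ∈ Set.uIcc (0:ℝ) (2 * π), HasDerivAt G (f x) x := by
      intro x _
      have h := (((hasDerivAt_id x).const_mul (2:ℝ)).add_const χ).sub
        (key_deriv A χ 1 hA hlt x)
      convert h using 1
      · rfl
      · rfl
      · rfl
      have hDB : (0:ℝ) < 1 + A ^ 2 + 2 * A * Real.cos (1 * (2 * x + χ)) := by
        rw [one_mul]; exact hDpos hne x
      rw [hf]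
      simp only [one_mul, mul_one]
      rw [eq_sub_iff_add_eq, ← add_div, div_eq_iff (hDpos hne x).ne']
      ring
    have hval : (∫ φ in (0:ℝ)..(2 * π), f φ) = G (2 * π) - G 0 :=
      intervalIntegral.integral_eq_sub_of_hasDerivAt hGd (hint hne)
    have hexp : Complex.exp ((((1:ℝ):ℂ) * (2 * ((2*π:ℝ):ℂ) + χ)) * Complex.I)
        = Complex.exp ((((1:ℝ):ℂ) * (2 * ((0:ℝ):ℂ) + χ)) * Complex.I) := by
      rw [show (((1:ℝ):ℂ) * (2 * ((2*π:ℝ):ℂ) + χ)) * Complex.I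
          = (((1:ℝ):ℂ) * (2 * ((0:ℝ):ℂ) + χ)) * Complex.I + (2 * (π:ℝ) * Complex.I + 2 * (π:ℝ) * Complex.I) by
        push_cast; ring]
      rw [Complex.exp_add, Complex.exp_add, Complex.exp_two_pi_mul_I, mul_one, mul_one]
    have hGval : G (2 * π) - G 0 = 4 * π := by
      rw [hG]; simp only
      push_cast
      push_cast at hexp
      rw [hexp]
      ring
    rw [hval, hGval]
    field_simp
    ring
  · -- A = 1
    intro h1
    subst h1
    have hS : MeasureTheory.volume {x : ℝ | Real.cos (2 * x + χ) = -1} = 0 := by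
      have hsub : {x : ℝ | Real.cos (2 * x + χ) = -1}
          ⊆ Set.range (fun n : ℤ => ((n : ℝ) * (2 * π) - π - χ) / 2) := by
        intro x hx
        have : Real.cos (2 * x + χ + π) = 1 := by
          rw [Real.cos_add_pi, hx]; ring
        obtain ⟨n, hn⟩ := (Real.cos_eq_one_iff _).mp this
        exact ⟨n, by simp only; linarith⟩
      exact MeasureTheory.measure_mono_null hsub
        ((Set.countable_range _).measure_zero _)
    have hae : ∀ᵐ x : ℝ, f x = 1 := by
      have h2 : ∀ᵐ x : ℝ, x ∉ {x : ℝ | Real.cos (2 * x + χ) = -1} := by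
        rw [MeasureTheory.ae_iff]
        simpa using hS
      filter_upwards [h2] with x hx
      have hc : Real.cos (2 * x + χ) ≠ -1 := hx
      have hcge : -1 ≤ Real.cos (2 * x + χ) := Real.neg_one_le_cos _
      have hd : (0:ℝ) < 1 + 1 ^ 2 + 2 * 1 * Real.cos (2 * x + χ) := by
        rcases lt_or_eq_of_le hcge with h | h
        · nlinarith
        · exact absurd h.symm hc
      rw [hf]
      simp only
      rw [div_eq_one_iff_eq hd.ne']
      ring
    have hval : (∫ φ in (0:ℝ)..(2 * π), f φ) = ∫ φ in (0:ℝ)..(2 * π), (1:ℝ) :=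
      intervalIntegral.integral_congr_ae (hae.mono fun x hx _ => hx)
    rw [hval]
    simp
    field_simp
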